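/- Along any solution c of the Kepler-Heisenberg system, the dilational momentum J = x·p_x + y·p_y + 2z·p_z satisfies dJ/dt = 2H₀ at every time, where H₀ = H(c(t)) is the (constant) energy of the solution. -/

import Mathlib

set_option maxHeartbeats 1000000


/-- `P_X = p_x - (1/2) y p_z`, where phase space coordinates are
`(x, y, z, p_x, p_y, p_z) = (p 0, p 1, p 2, p 3, p 4, p 5)`. -/
noncomputable def PX (p : Fin 6 → ℝ) : ℝ := p 3 - (1/2) * p 1 * p 5

/-- `P_Y = p_y + (1/2) x p_z`. -/
noncomputable def PY (p : Fin 6 → ℝ) : ℝ := p 4 + (1/2) * p 0 * p 5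

/-- `Q = (x² + y²)² + 16 z²`. -/
noncomputable def Qf (p : Fin 6 → ℝ) : ℝ := ((p 0)^2 + (p 1)^2)^2 + 16 * (p 2)^2

/-- The Kepler–Heisenberg Hamiltonian `H = (1/2)(P_X² + P_Y²) - (1/(8π)) Q^{-1/2}`. -/
noncomputable def Ham (p : Fin 6 → ℝ) : ℝ :=
  (1/2) * ((PX p)^2 + (PY p)^2) - (1/(8*Real.pi)) * (Qf p) ^ (-(1/2) : ℝ)

/-- A solution of the Kepler–Heisenberg system: a differentiable curve on an open
interval (open preconnected set) `I`, whose position component never vanishes, and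
which satisfies Hamilton's equations for `Ham`. -/
def IsSolutionOn (c : ℝ → Fin 6 → ℝ) (I : Set ℝ) : Prop :=
  IsOpen I ∧ IsPreconnected I ∧
  ∀ t ∈ I,
    (¬ (c t 0 = 0 ∧ c t 1 = 0 ∧ c t 2 = 0)) ∧
    HasDerivAt (fun τ => c τ 0) (fderiv ℝ Ham (c t) (Pi.single 3 1)) t ∧
    HasDerivAt (fun τ => c τ 1) (fderiv ℝ Ham (c t) (Pi.single 4 1)) t ∧
    HasDerivAt (fun τ => c τ 2) (fderiv ℝ Ham (c t) (Pi.single 5 1)) t ∧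
    HasDerivAt (fun τ => c τ 3) (-(fderiv ℝ Ham (c t) (Pi.single 0 1))) t ∧
    HasDerivAt (fun τ => c τ 4) (-(fderiv ℝ Ham (c t) (Pi.single 1 1))) t ∧
    HasDerivAt (fun τ => c τ 5) (-(fderiv ℝ Ham (c t) (Pi.single 2 1))) t

/-- The dilational momentum `J = x p_x + y p_y + 2 z p_z`. -/
noncomputable def Jmom (p : Fin 6 → ℝ) : ℝ := p 0 * p 3 + p 1 * p 4 + 2 * p 2 * p 5

open ContinuousLinearMap in
lemma ham_grad (p : Fin 6 → ℝ) (hp : 0 < Qf p) :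
    fderiv ℝ Ham p (Pi.single 3 1) = PX p ∧
    fderiv ℝ Ham p (Pi.single 4 1) = PY p ∧
    fderiv ℝ Ham p (Pi.single 5 1) = PX p * (-(1/2) * p 1) + PY p * ((1/2) * p 0) ∧
    fderiv ℝ Ham p (Pi.single 0 1)
      = PY p * ((1/2) * p 5)
        + (1/(8*Real.pi)) * ((1/2) * (Qf p) ^ (-(3/2) : ℝ)) * (4 * p 0 * ((p 0)^2 + (p 1)^2)) ∧
    fderiv ℝ Ham p (Pi.single 1 1)
      = PX p * (-(1/2) * p 5)
        + (1/(8*Real.pi)) * ((1/2) * (Qf p) ^ (-(3/2) : ℝ)) * (4 * p 1 * ((p 0)^2 + (p 1)^2)) ∧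
    fderiv ℝ Ham p (Pi.single 2 1)
      = (1/(8*Real.pi)) * ((1/2) * (Qf p) ^ (-(3/2) : ℝ)) * (32 * p 2) := by
  have h0 : HasFDerivAt (fun q : Fin 6 → ℝ => q 0) (proj 0 : (Fin 6 → ℝ) →L[ℝ] ℝ) p :=
    (proj 0 : (Fin 6 → ℝ) →L[ℝ] ℝ).hasFDerivAt
  have h1 : HasFDerivAt (fun q : Fin 6 → ℝ => q 1) (proj 1 : (Fin 6 → ℝ) →L[ℝ] ℝ) p :=
    (proj 1 : (Fin 6 → ℝ) →L[ℝ] ℝ).hasFDerivAt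
  have h2 : HasFDerivAt (fun q : Fin 6 → ℝ => q 2) (proj 2 : (Fin 6 → ℝ) →L[ℝ] ℝ) p :=
    (proj 2 : (Fin 6 → ℝ) →L[ℝ] ℝ).hasFDerivAt
  have h3 : HasFDerivAt (fun q : Fin 6 → ℝ => q 3) (proj 3 : (Fin 6 → ℝ) →L[ℝ] ℝ) p :=
    (proj 3 : (Fin 6 → ℝ) →L[ℝ] ℝ).hasFDerivAt
  have h4 : HasFDerivAt (fun q : Fin 6 → ℝ => q 4) (proj 4 : (Fin 6 → ℝ) →L[ℝ] ℝ) p :=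
    (proj 4 : (Fin 6 → ℝ) →L[ℝ] ℝ).hasFDerivAt
  have h5 : HasFDerivAt (fun q : Fin 6 → ℝ => q 5) (proj 5 : (Fin 6 → ℝ) →L[ℝ] ℝ) p :=
    (proj 5 : (Fin 6 → ℝ) →L[ℝ] ℝ).hasFDerivAt
  have hPX := h3.sub ((h1.const_mul (1/2 : ℝ)).mul h5)
  have hPY := h4.add ((h0.const_mul (1/2 : ℝ)).mul h5)
  have hKin := ((hPX.mul hPX).add (hPY.mul hPY)).const_mul (1/2 : ℝ)
  have hS := (h0.mul h0).add (h1.mul h1)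
  have hQ0 := (hS.mul hS).add ((h2.mul h2).const_mul (16 : ℝ))
  have hQfun : (fun q : Fin 6 → ℝ => (q 0 * q 0 + q 1 * q 1) * (q 0 * q 0 + q 1 * q 1)
      + 16 * (q 2 * q 2)) = Qf := by
    funext q; simp only [Qf]; ring
  have hrpow : HasDerivAt (fun x : ℝ => x ^ (-(1/2) : ℝ))
      ((-(1/2)) * (Qf p) ^ ((-(1/2) : ℝ) - 1)) (Qf p) :=
    Real.hasDerivAt_rpow_const (Or.inl hp.ne')
  replace hQ0 : HasFDerivAt (fun q : Fin 6 → ℝ => (q 0 * q 0 + q 1 * q 1) * (q 0 * q 0 + q 1 * q 1)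
      + 16 * (q 2 * q 2)) _ p := hQ0
  rw [hQfun] at hQ0
  have hQ' : HasFDerivAt Qf _ p := hQ0
  have hV := hrpow.comp_hasFDerivAt p hQ'
  have hH := hKin.sub (hV.const_mul (1/(8*Real.pi)))
  have hfun : Ham = (fun q : Fin 6 → ℝ =>
      1/2 * ((fun q : Fin 6 → ℝ => q 3 - 1/2 * q 1 * q 5) q
          * (fun q : Fin 6 → ℝ => q 3 - 1/2 * q 1 * q 5) q
        + (fun q : Fin 6 → ℝ => q 4 + 1/2 * q 0 * q 5) q
          * (fun q : Fin 6 → ℝ => q 4 + 1/2 * q 0 * q 5) q)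
      - 1/(8*Real.pi) * ((fun x : ℝ => x ^ (-(1/2) : ℝ)) ∘ Qf) q) := by
    funext q
    simp [Ham, PX, PY, Function.comp]; ring
  rw [hfun]
  replace hH : HasFDerivAt (fun q : Fin 6 → ℝ =>
      1/2 * ((fun q : Fin 6 → ℝ => q 3 - 1/2 * q 1 * q 5) q
          * (fun q : Fin 6 → ℝ => q 3 - 1/2 * q 1 * q 5) q
        + (fun q : Fin 6 → ℝ => q 4 + 1/2 * q 0 * q 5) q
          * (fun q : Fin 6 → ℝ => q 4 + 1/2 * q 0 * q 5) q)
      - 1/(8*Real.pi) * ((fun x : ℝ => x ^ (-(1/2) : ℝ)) ∘ Qf) q) _ p := hH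
  rw [(hH : HasFDerivAt _ _ p).fderiv]
  have hexp : (-(1/2) : ℝ) - 1 = -(3/2) := by norm_num
  refine ⟨?_, ?_, ?_, ?_, ?_, ?_⟩ <;>
  · simp only [ContinuousLinearMap.add_apply, ContinuousLinearMap.sub_apply,
      ContinuousLinearMap.smul_apply, ContinuousLinearMap.coe_smul', Pi.smul_apply,
      ContinuousLinearMap.proj_apply, smul_eq_mul, hexp, PX, PY, Qf]
    simp [Pi.single_apply]
    ring

/-- Along any solution of the Kepler–Heisenberg system, the dilational momentum
`J = x p_x + y p_y + 2 z p_z` satisfies `dJ/dt = 2 H(c(t))` at every time. -/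
theorem kh_dilational_momentum_derivative (c : ℝ → Fin 6 → ℝ) (I : Set ℝ)
    (hc : IsSolutionOn c I) :
    ∀ t ∈ I, HasDerivAt (fun τ => Jmom (c τ)) (2 * Ham (c t)) t := by
  obtain ⟨-, -, hsol⟩ := hc
  intro t ht
  obtain ⟨hpos, hx, hy, hz, hpx, hpy, hpz⟩ := hsol t ht
  have hQ : 0 < Qf (c t) := by
    rcases eq_or_lt_of_le (show (0:ℝ) ≤ Qf (c t) by unfold Qf; positivity) with h | h
    · exfalso
      apply hpos
      have h' : ((c t 0)^2 + (c t 1)^2)^2 + 16 * (c t 2)^2 = 0 := by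
        simpa [Qf] using h.symm
      have hS : (c t 0)^2 + (c t 1)^2 = 0 := by
        have h1 : ((c t 0)^2 + (c t 1)^2)^2 = 0 := by
          nlinarith [sq_nonneg ((c t 0)^2 + (c t 1)^2), sq_nonneg (c t 2)]
        exact pow_eq_zero_iff two_ne_zero |>.mp h1
      have hx2 : (c t 0)^2 = 0 := by nlinarith [sq_nonneg (c t 0), sq_nonneg (c t 1)]
      have hy2 : (c t 1)^2 = 0 := by nlinarith [sq_nonneg (c t 0), sq_nonneg (c t 1)]
      have hz2 : (c t 2)^2 = 0 := by nlinarith [sq_nonneg ((c t 0)^2 + (c t 1)^2)]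
      exact ⟨pow_eq_zero_iff two_ne_zero |>.mp hx2,
        pow_eq_zero_iff two_ne_zero |>.mp hy2,
        pow_eq_zero_iff two_ne_zero |>.mp hz2⟩
    · exact h
  obtain ⟨g3, g4, g5, g0, g1, g2⟩ := ham_grad (c t) hQ
  rw [g3] at hx; rw [g4] at hy; rw [g5] at hz
  rw [g0] at hpx; rw [g1] at hpy; rw [g2] at hpz
  have hprod := ((hx.mul hpx).add (hy.mul hpy)).add ((hz.mul hpz).const_mul (2:ℝ))
  have hfun : (fun τ => c τ 0 * c τ 3 + c τ 1 * c τ 4 + 2 * (c τ 2 * c τ 5))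
      = fun τ => Jmom (c τ) := by
    funext τ; simp only [Jmom]; ring
  replace hprod : HasDerivAt (fun τ => c τ 0 * c τ 3 + c τ 1 * c τ 4 + 2 * (c τ 2 * c τ 5)) _ t := hprod
  rw [hfun] at hprod
  have hQR : Qf (c t) * (Qf (c t)) ^ (-(3/2) : ℝ) = (Qf (c t)) ^ (-(1/2) : ℝ) := by
    have h : Qf (c t) * Qf (c t) ^ (-(3/2):ℝ) = Qf (c t) ^ ((1:ℝ) + -(3/2)) := by
      rw [Real.rpow_add hQ, Real.rpow_one]
    rw [h]
    norm_num
  have hval : PX (c t) * c t 3 +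
        c t 0 * -(PY (c t) * (1/2 * c t 5) + 1/(8*Real.pi) * (1/2 * Qf (c t) ^ (-(3/2):ℝ))
          * (4 * c t 0 * ((c t 0)^2 + (c t 1)^2))) +
      (PY (c t) * c t 4 +
        c t 1 * -(PX (c t) * (-(1/2) * c t 5) + 1/(8*Real.pi) * (1/2 * Qf (c t) ^ (-(3/2):ℝ))
          * (4 * c t 1 * ((c t 0)^2 + (c t 1)^2))) ) +
      2 * ((PX (c t) * (-(1/2) * c t 1) + PY (c t) * (1/2 * c t 0)) * c t 5 +
        c t 2 * -(1/(8*Real.pi) * (1/2 * Qf (c t) ^ (-(3/2):ℝ)) * (32 * c t 2)))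
      = 2 * Ham (c t) := by
    simp only [Ham, PX, PY]
    rw [show Qf (c t) ^ (-(1/2):ℝ) = Qf (c t) * Qf (c t) ^ (-(3/2):ℝ) from hQR.symm]
    simp only [Qf]
    ring
  exact hval ▸ hprod
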